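/- In the setting of a compact self-adjoint nonnegative transfer operator T with eigen-decomposition as above, the variational formula ∑_{i=1}^m ω_i λ_i = max { ∑_{i=1}^m ω_i ⟨f_i, T f_i⟩_μ : f₁,…,f_m ∈ H, E_μ(f_i)=0, ⟨f_i,f_j⟩_μ=δ_{ij} } holds (the VAMP-type formulation), equivalent to the Dirichlet energy minimization via E(f) = ⟨(I−T)f,f⟩_μ and the normalization constraints. -/
import Mathlib


open MeasureTheory RealInnerProductSpace Finset

/-- Abel-summation type inequality: if partial sums of `a` are dominated by partial sums of
`l`, and `w` is antitone and nonnegative, then the `w`-weighted sum of `a` is dominated by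
the `w`-weighted sum of `l`. -/
lemma vamp_abel_ineq : ∀ (m : ℕ) (w a l : ℕ → ℝ),
    (∀ i j, i ≤ j → j < m → w j ≤ w i) → (∀ i, i < m → 0 ≤ w i) →
    (∀ k, k ≤ m → ∑ i ∈ range k, a i ≤ ∑ i ∈ range k, l i) →
    ∑ i ∈ range m, w i * a i ≤ ∑ i ∈ range m, w i * l i := by
  intro m
  induction m with
  | zero => intro w a l _ _ _; simp
  | succ n ih =>
    intro w a l hmono hnn hpart
    have h1 : ∀ g : ℕ → ℝ, ∑ i ∈ range (n+1), w i * g i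
        = ∑ i ∈ range n, (w i - w n) * g i + w n * ∑ i ∈ range (n+1), g i := by
      intro g
      have e1 : ∑ i ∈ range (n+1), w i * g i
          = ∑ i ∈ range (n+1), ((w i - w n) * g i + w n * g i) := by
        apply Finset.sum_congr rfl; intro i _; ring
      rw [e1, Finset.sum_add_distrib, ← Finset.mul_sum,
        Finset.sum_range_succ (fun i => (w i - w n) * g i), sub_self, zero_mul, add_zero]
    rw [h1 a, h1 l]
    have hA : ∑ i ∈ range n, (w i - w n) * a i ≤ ∑ i ∈ range n, (w i - w n) * l i := by
      apply ih (fun i => w i - w n) a l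
      · intro i j hij hj
        have := hmono i j hij (by omega)
        simp only [sub_le_sub_iff_right]; exact this
      · intro i hi
        have := hmono i n (by omega) (by omega)
        simp only [sub_nonneg]; exact this
      · intro k hk; exact hpart k (by omega)
    have hB : w n * ∑ i ∈ range (n+1), a i ≤ w n * ∑ i ∈ range (n+1), l i := by
      apply mul_le_mul_of_nonneg_left (hpart (n+1) le_rfl) (hnn n (by omega))
    linarith

/-- (VAMP-type variational formula) For a compact self-adjoint nonnegative
transfer operator `T` on `H = L²_μ` with eigenvalues `1 = λ₀ > λ₁ ≥ … ≥ 0` and orthonormal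
eigenbasis `(φ_i)` (`φ₀` the constant function), and weights `ω₁ ≥ … ≥ ω_m > 0`:
`∑ ω_i λ_i = max { ∑ ω_i ⟨f_i, T f_i⟩ : (f_i) zero-mean orthonormal }`. -/
theorem vamp_variational_formula {H : Type*}
    [NormedAddCommGroup H] [InnerProductSpace ℝ H] [CompleteSpace H]
    (T : H →L[ℝ] H) (hT : IsSelfAdjoint T) (hTc : IsCompactOperator (⇑T))
    (hTpos : ∀ f : H, 0 ≤ ⟪T f, f⟫)
    (lam : ℕ → ℝ) (φ : ℕ → H)
    (hON : Orthonormal ℝ φ)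
    (hspan : (Submodule.span ℝ (Set.range φ)).topologicalClosure = ⊤)
    (heig : ∀ i, T (φ i) = lam i • φ i)
    (hl0 : lam 0 = 1) (hl1 : lam 1 < 1)
    (hanti : Antitone lam) (hnn : ∀ i, 0 ≤ lam i)
    (m : ℕ) (hm : 1 ≤ m) (ω : Fin m → ℝ)
    (hω_mono : ∀ i j : Fin m, i ≤ j → ω j ≤ ω i) (hω_pos : ∀ i, 0 < ω i) :
    IsGreatest
      { S : ℝ | ∃ f : Fin m → H,
          (∀ i, ⟪f i, φ 0⟫ = 0) ∧
          (∀ i j, ⟪f i, f j⟫ = if i = j then 1 else 0) ∧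
          S = ∑ i, ω i * ⟪f i, T (f i)⟫ }
      (∑ i : Fin m, ω i * lam (i.val + 1)) := by
  have hONite := orthonormal_iff_ite.mp hON
  constructor
  · -- membership: take f i = φ (i+1)
    refine ⟨fun i => φ (i.val + 1), ?_, ?_, ?_⟩
    · intro i
      have := hONite (i.val + 1) 0
      simpa using this
    · intro i j
      have := hONite (i.val + 1) (j.val + 1)
      simp only [add_left_inj, Nat.succ_inj] at this ⊢
      rw [this]
      by_cases h : i = j
      · simp [h]
      · have : ¬ (i.val = j.val) := fun hv => h (Fin.ext hv)
        simp [h, this]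
    · apply Finset.sum_congr rfl
      intro i _
      rw [heig (i.val + 1), real_inner_smul_right, hONite, if_pos rfl, mul_one]
  · -- upper bound
    rintro S ⟨f, h0, horth, rfl⟩
    -- Hilbert basis
    let b : HilbertBasis ℕ ℝ H := HilbertBasis.mk hON hspan.ge
    have hb : ∀ j, b j = φ j := fun j => by
      rw [show ⇑b = φ from HilbertBasis.coe_mk _ _]
    have hsym : ∀ x y : H, ⟪T x, y⟫ = ⟪x, T y⟫ := fun x y => hT.isSymmetric x y
    have hfON : Orthonormal ℝ f := orthonormal_iff_ite.mpr horth
    -- key: spectral expansion of the quadratic form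
    have keyA : ∀ g : H, HasSum (fun j => lam j * ⟪g, φ j⟫ ^ 2) ⟪g, T g⟫ := by
      intro g
      have h := b.hasSum_inner_mul_inner g (T g)
      have heq : ∀ j, ⟪g, b j⟫ * ⟪b j, T g⟫ = lam j * ⟪g, φ j⟫ ^ 2 := by
        intro j
        rw [hb j, ← hsym, heig j, real_inner_smul_left, real_inner_comm (φ j) g]
        ring
      simpa only [heq] using h
    have keyN : ∀ g : H, ⟪g, g⟫ = 1 → HasSum (fun j => ⟪g, φ j⟫ ^ 2) 1 := by
      intro g hg
      have h := b.hasSum_inner_mul_inner g g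
      rw [hg] at h
      have heq : ∀ j, ⟪g, b j⟫ * ⟪b j, g⟫ = ⟪g, φ j⟫ ^ 2 := by
        intro j; rw [hb j, real_inner_comm (φ j) g]; ring
      simpa only [heq] using h
    -- extend f and ω to ℕ
    set f' : ℕ → H := fun n => if h : n < m then f ⟨n, h⟩ else 0 with hf'
    set W : ℕ → ℝ := fun n => if h : n < m then ω ⟨n, h⟩ else 0 with hW
    set F : ℕ → ℝ := fun n => ⟪f' n, T (f' n)⟫ with hF
    have hf'v : ∀ i : Fin m, f' i.val = f i := by
      intro i; simp only [hf', i.isLt, dif_pos]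
    -- Bessel column bound
    have bessel : ∀ j : ℕ, ∀ k : ℕ, k ≤ m →
        ∑ i ∈ range k, ⟪f' i, φ j⟫ ^ 2 ≤ 1 := by
      intro j k hk
      have h1 : ∑ i ∈ range k, ⟪f' i, φ j⟫ ^ 2 ≤ ∑ i ∈ range m, ⟪f' i, φ j⟫ ^ 2 := by
        apply Finset.sum_le_sum_of_subset_of_nonneg (Finset.range_subset_range.mpr hk)
        intro i _ _; positivity
      have h2 : ∑ i ∈ range m, ⟪f' i, φ j⟫ ^ 2 = ∑ i : Fin m, ‖⟪f i, φ j⟫‖ ^ 2 := by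
        rw [← Fin.sum_univ_eq_sum_range (fun i => ⟪f' i, φ j⟫ ^ 2) m]
        apply Finset.sum_congr rfl
        intro i _; rw [hf'v i, Real.norm_eq_abs, sq_abs]
      have h3 : ∑ i : Fin m, ‖⟪f i, φ j⟫‖ ^ 2 ≤ ‖φ j‖ ^ 2 :=
        hfON.sum_inner_products_le (φ j)
      have h4 : ‖φ j‖ = 1 := hON.1 j
      rw [h2] at h1
      calc ∑ i ∈ range k, ⟪f' i, φ j⟫ ^ 2 ≤ ‖φ j‖ ^ 2 := le_trans h1 h3
        _ = 1 := by rw [h4]; norm_num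
    -- per-element bound for fixed k
    have perElem : ∀ k : ℕ, 1 ≤ k → k ≤ m → ∀ n : ℕ, n < k →
        F n ≤ lam k + ∑ j ∈ Finset.Ico 1 k, (lam j - lam k) * ⟪f' n, φ j⟫ ^ 2 := by
      intro k hk1 hkm n hnk
      have hnm : n < m := lt_of_lt_of_le hnk hkm
      have hfn : f' n = f ⟨n, hnm⟩ := by simp only [hf', hnm, dif_pos]
      have hc0 : ⟪f' n, φ 0⟫ = 0 := by rw [hfn]; exact h0 _
      have hnorm : ⟪f' n, f' n⟫ = 1 := by
        rw [hfn]; simpa using horth ⟨n, hnm⟩ ⟨n, hnm⟩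
      have hA := keyA (f' n)
      have hN := keyN (f' n) hnorm
      -- RHS has sum
      set D : ℕ → ℝ := fun j => if j ∈ Finset.Ico 1 k then (lam j - lam k) * ⟪f' n, φ j⟫ ^ 2 else 0
        with hD
      have hDsum : HasSum D (∑ j ∈ Finset.Ico 1 k, (lam j - lam k) * ⟪f' n, φ j⟫ ^ 2) := by
        have h1 : HasSum D (∑ j ∈ Finset.Ico 1 k, D j) :=
          hasSum_sum_of_ne_finset_zero (fun j hj => by simp only [hD, if_neg hj])
        have h2 : ∑ j ∈ Finset.Ico 1 k, D j
            = ∑ j ∈ Finset.Ico 1 k, (lam j - lam k) * ⟪f' n, φ j⟫ ^ 2 :=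
          Finset.sum_congr rfl (fun j hj => by simp only [hD, if_pos hj])
        rwa [h2] at h1
      have hRHS : HasSum (fun j => lam k * ⟪f' n, φ j⟫ ^ 2 + D j)
          (lam k + ∑ j ∈ Finset.Ico 1 k, (lam j - lam k) * ⟪f' n, φ j⟫ ^ 2) := by
        have := (hN.mul_left (lam k)).add hDsum
        simpa using this
      refine hasSum_le ?_ hA hRHS
      intro j
      by_cases hj0 : j = 0
      · subst hj0
        rw [hc0]
        simp [hD, hk1]
      by_cases hjk : j < k
      · have hjI : j ∈ Finset.Ico 1 k := Finset.mem_Ico.mpr ⟨Nat.one_le_iff_ne_zero.mpr hj0, hjk⟩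
        simp only [hD, if_pos hjI]
        have : lam j * ⟪f' n, φ j⟫ ^ 2 = lam k * ⟪f' n, φ j⟫ ^ 2 + (lam j - lam k) * ⟪f' n, φ j⟫ ^ 2 := by ring
        rw [this]
      · have hjI : j ∉ Finset.Ico 1 k := by
          simp only [Finset.mem_Ico]; omega
        simp only [hD, if_neg hjI, add_zero]
        apply mul_le_mul_of_nonneg_right (hanti (le_of_not_gt hjk)) (by positivity)
    -- partial sum bound
    have hpart : ∀ k, k ≤ m → ∑ i ∈ range k, F i ≤ ∑ i ∈ range k, lam (i + 1) := by
      intro k hkm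
      rcases Nat.eq_zero_or_pos k with hk0 | hk1
      · subst hk0; simp
      have step1 : ∑ i ∈ range k, F i
          ≤ ∑ i ∈ range k, (lam k + ∑ j ∈ Finset.Ico 1 k, (lam j - lam k) * ⟪f' i, φ j⟫ ^ 2) := by
        apply Finset.sum_le_sum
        intro i hi
        exact perElem k hk1 hkm i (Finset.mem_range.mp hi)
      have step2 : ∑ i ∈ range k, (lam k + ∑ j ∈ Finset.Ico 1 k, (lam j - lam k) * ⟪f' i, φ j⟫ ^ 2)
          = k * lam k + ∑ j ∈ Finset.Ico 1 k, (lam j - lam k) * ∑ i ∈ range k, ⟪f' i, φ j⟫ ^ 2 := by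
        rw [Finset.sum_add_distrib, Finset.sum_const, Finset.card_range, nsmul_eq_mul,
          Finset.sum_comm]
        congr 1
        apply Finset.sum_congr rfl
        intro j _
        rw [Finset.mul_sum]
      have step3 : ∑ j ∈ Finset.Ico 1 k, (lam j - lam k) * ∑ i ∈ range k, ⟪f' i, φ j⟫ ^ 2
          ≤ ∑ j ∈ Finset.Ico 1 k, (lam j - lam k) := by
        apply Finset.sum_le_sum
        intro j hj
        have hjk : j ≤ k := le_of_lt (Finset.mem_Ico.mp hj).2
        have hlam : 0 ≤ lam j - lam k := sub_nonneg.mpr (hanti hjk)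
        calc (lam j - lam k) * ∑ i ∈ range k, ⟪f' i, φ j⟫ ^ 2
            ≤ (lam j - lam k) * 1 := mul_le_mul_of_nonneg_left (bessel j k hkm) hlam
          _ = lam j - lam k := mul_one _
      have step4 : (k : ℝ) * lam k + ∑ j ∈ Finset.Ico 1 k, (lam j - lam k)
          = ∑ i ∈ range k, lam (i + 1) := by
        rw [Finset.sum_sub_distrib, Finset.sum_const, Nat.card_Ico, nsmul_eq_mul]
        have hcast : ((k - 1 : ℕ) : ℝ) = (k : ℝ) - 1 := by
          rw [Nat.cast_sub hk1]; norm_num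
        rw [hcast]
        have : ∑ i ∈ range k, lam (i + 1) = ∑ j ∈ Finset.Ico 1 (k + 1), lam j := by
          rw [Finset.sum_Ico_eq_sum_range]
          simp [add_comm]
        rw [this, Finset.sum_Ico_succ_top (by omega : 1 ≤ k)]
        ring
      calc ∑ i ∈ range k, F i
          ≤ k * lam k + ∑ j ∈ Finset.Ico 1 k, (lam j - lam k) * ∑ i ∈ range k, ⟪f' i, φ j⟫ ^ 2 := by
            rw [← step2]; exact step1
        _ ≤ k * lam k + ∑ j ∈ Finset.Ico 1 k, (lam j - lam k) := by linarith [step3]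
        _ = ∑ i ∈ range k, lam (i + 1) := step4
    -- Abel summation
    have habel := vamp_abel_ineq m W F (fun i => lam (i + 1))
      (by
        intro i j hij hj
        simp only [hW, hj, dif_pos, (lt_of_le_of_lt hij hj), dif_pos]
        exact hω_mono ⟨i, lt_of_le_of_lt hij hj⟩ ⟨j, hj⟩ hij)
      (by
        intro i hi
        simp only [hW, hi, dif_pos]
        exact (hω_pos _).le)
      hpart
    -- convert Fin sums to range sums
    have hL : ∑ i : Fin m, ω i * ⟪f i, T (f i)⟫ = ∑ i ∈ range m, W i * F i := by
      rw [← Fin.sum_univ_eq_sum_range (fun i => W i * F i) m]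
      apply Finset.sum_congr rfl
      intro i _
      simp only [hW, hF, i.isLt, dif_pos, hf'v i]
    have hR : ∑ i : Fin m, ω i * lam (i.val + 1) = ∑ i ∈ range m, W i * lam (i + 1) := by
      rw [← Fin.sum_univ_eq_sum_range (fun i => W i * lam (i + 1)) m]
      apply Finset.sum_congr rfl
      intro i _
      simp only [hW, i.isLt, dif_pos]
    rw [hL, hR]
    exact habel
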